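/- The eigenvalue λ_{k,q}^{(α,n)} of the (α,q)-Bernstein operator admits the product representation λ_{k,q}^{(α,n)} = (α + (1-α)·[n-k]_q[n+k-1]_q/([n]_q[n-1]_q)) · Π_{m=1}^{k-1} (1 - [m]_q/[n]_q) for 2 ≤ k ≤ n. -/
import Mathlib


open Finset Filter Topology

/-- The q-integer `[m]_q = 1 + q + ... + q^{m-1}`, with `[0]_q = 0`. -/
noncomputable def qInt (q : ℝ) (m : ℕ) : ℝ := ∑ i ∈ Finset.range m, q ^ i

/-- The q-factorial `[n]_q! = [1]_q [2]_q ⋯ [n]_q`. -/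
noncomputable def qFact (q : ℝ) (n : ℕ) : ℝ := ∏ i ∈ Finset.range n, qInt q (i + 1)

/-- The q-binomial coefficient `[n]_q!/([k]_q! [n-k]_q!)` (zero if `k > n`). -/
noncomputable def qBinom (q : ℝ) (n k : ℕ) : ℝ :=
  if k ≤ n then qFact q n / (qFact q k * qFact q (n - k)) else 0

/-- The q-Stirling number of the second kind. -/
noncomputable def qStirling (q : ℝ) (k r : ℕ) : ℝ :=
  (1 / (qFact q r * q ^ (r * (r - 1) / 2))) *
    ∑ i ∈ Finset.range (r + 1),
      (-1 : ℝ) ^ i * q ^ (i * (i - 1) / 2) * qBinom q r i * (qInt q (r - i)) ^ k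

/-- The q-forward difference operator on sequences:
`Δ_q^0 f_i = f_i`, `Δ_q^{r+1} f_i = Δ_q^r f_{i+1} - q^r Δ_q^r f_i`. -/
noncomputable def qDiff (q : ℝ) : ℕ → (ℕ → ℝ) → ℕ → ℝ
  | 0, f, i => f i
  | r + 1, f, i => qDiff q r f (i + 1) - q ^ r * qDiff q r f i

/-- The eigenvalues `λ_{k,q}^{(α,n)}` of the (α,q)-Bernstein operator. -/
noncomputable def lamEig (q α : ℝ) (n k : ℕ) : ℝ :=
  q ^ (k * (k - 1) / 2) * qFact q (n - 2) / (qFact q (n - k) * (qInt q n) ^ k) *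
    ((1 - α) * qInt q (n - k) * qInt q (n - 1 + k) + α * qInt q n * qInt q (n - 1))

/-- The coefficients `a_{n,q}(r,k)` of `T_{n,q,α}(t^k; x) = Σ_r a_{n,q}(r,k) x^r`. -/
noncomputable def aCoef (q α : ℝ) (n r k : ℕ) : ℝ :=
  q ^ (r * (r - 1) / 2) * qFact q (n - 2) / ((qInt q n) ^ k * qFact q (n - r)) *
    ((1 - α) * qInt q (n - r) *
        (qInt q (n + r - 1) * qStirling q (k + 1) (r + 1) -
          qInt q (r + 1) * qInt q (n - 1) * qStirling q k (r + 1)) +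
      α * qInt q n * qInt q (n - 1) * qStirling q k r)

/-- The (α,q)-Bernstein operator, via its forward-difference representation
`T_{n,q,α}(f;x) = Σ_{r=0}^n ((1-α) C_q(n-1,r) Δ_q^r g_0 + α C_q(n,r) Δ_q^r f_0) x^r`,
where `f_i = f([i]_q/[n]_q)` and
`g_i = (1 - q^{n-i-1}[i]_q/[n-1]_q) f_i + (q^{n-i-1}[i]_q/[n-1]_q) f_{i+1}`. -/
noncomputable def Talpha (q α : ℝ) (n : ℕ) (f : ℝ → ℝ) (x : ℝ) : ℝ :=
  let fs : ℕ → ℝ := fun i => f (qInt q i / qInt q n)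
  let gs : ℕ → ℝ := fun i =>
    (1 - q ^ (n - i - 1) * qInt q i / qInt q (n - 1)) * fs i +
      (q ^ (n - i - 1) * qInt q i / qInt q (n - 1)) * fs (i + 1)
  ∑ r ∈ Finset.range (n + 1),
    ((1 - α) * qBinom q (n - 1) r * qDiff q r gs 0 + α * qBinom q n r * qDiff q r fs 0) * x ^ r

lemma qInt_pos {q : ℝ} (hq : 0 < q) {m : ℕ} (hm : m ≠ 0) : 0 < qInt q m := by
  apply Finset.sum_pos (fun i _ => pow_pos hq i)
  exact Finset.nonempty_range_iff.mpr hm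

lemma qFact_pos {q : ℝ} (hq : 0 < q) (n : ℕ) : 0 < qFact q n :=
  Finset.prod_pos (fun i _ => qInt_pos hq (Nat.succ_ne_zero i))

lemma qInt_split {q : ℝ} {m n : ℕ} (h : m ≤ n) :
    qInt q n = qInt q m + q ^ m * qInt q (n - m) := by
  unfold qInt
  rw [← Finset.sum_range_add_sum_Ico _ h, Finset.sum_Ico_eq_sum_range, Finset.mul_sum]
  congr 1
  exact Finset.sum_congr rfl fun i _ => (pow_add q m i)

lemma qFact_prod {q : ℝ} : ∀ k n, k ≤ n →
    qFact q n = qFact q (n - k) * ∏ m ∈ Finset.range k, qInt q (n - m) := by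
  intro k
  induction k with
  | zero => simp
  | succ k ih =>
    intro n hn
    have h1 : k ≤ n := Nat.le_of_succ_le hn
    rw [Finset.prod_range_succ, ih n h1]
    have h2 : n - k = (n - (k + 1)) + 1 := by omega
    rw [h2]
    show qFact q (n - (k+1) + 1) * _ = _
    unfold qFact
    rw [Finset.prod_range_succ]
    have h3 : n - (k + 1) + 1 = n - k := by omega
    rw [h3]
    ring

theorem lamEig_prod_rep (q α : ℝ) (hq : 0 < q) (hα : α ∈ Set.Icc (0 : ℝ) 1)
    (n k : ℕ) (hk : 2 ≤ k) (hkn : k ≤ n) :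
    lamEig q α n k =
      (α + (1 - α) * qInt q (n - k) * qInt q (n + k - 1) / (qInt q n * qInt q (n - 1))) *
        ∏ m ∈ Finset.Icc 1 (k - 1), (1 - qInt q m / qInt q n) := by
  have hn2 : 2 ≤ n := le_trans hk hkn
  have hnpos : 0 < qInt q n := qInt_pos hq (by omega)
  have hn1pos : 0 < qInt q (n - 1) := qInt_pos hq (by omega)
  have hfpos : 0 < qFact q (n - k) := qFact_pos hq (n - k)
  have hf2pos : 0 < qFact q (n - 2) := qFact_pos hq (n - 2)
  -- rewrite each factor of the product
  have hfac : ∀ m ∈ Finset.Icc 1 (k - 1),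
      (1 - qInt q m / qInt q n) = q ^ m * qInt q (n - m) / qInt q n := by
    intro m hm
    rw [Finset.mem_Icc] at hm
    have hsp := qInt_split (q := q) (m := m) (n := n) (by omega)
    field_simp
    linarith [hsp]
  rw [Finset.prod_congr rfl hfac]
  have hprod : ∏ m ∈ Finset.Icc 1 (k - 1), (q ^ m * qInt q (n - m) / qInt q n)
      = (∏ m ∈ Finset.Icc 1 (k - 1), q ^ m) * (∏ m ∈ Finset.Icc 1 (k - 1), qInt q (n - m))
        / (qInt q n) ^ (k - 1) := by
    rw [Finset.prod_div_distrib, Finset.prod_mul_distrib, Finset.prod_const,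
      Nat.card_Icc]
    norm_num
  rw [hprod]
  have hIcc : Finset.Icc 1 (k - 1) = Finset.Ico 1 k := by
    rw [← Finset.Ico_add_one_right_eq_Icc]
    congr 1
    omega
  -- the power of q
  have hqpow : (∏ m ∈ Finset.Icc 1 (k - 1), q ^ m) = q ^ (k * (k - 1) / 2) := by
    rw [Finset.prod_pow_eq_pow_sum]
    congr 1
    have hs0 : ∑ m ∈ Finset.range k, m = ∑ m ∈ Finset.Ico 1 k, m := by
      rw [Finset.range_eq_Ico, Finset.sum_eq_sum_Ico_succ_bot (by omega : 0 < k)]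
      simp
    have hs2 := Finset.sum_range_id_mul_two k
    rw [hIcc]
    omega
  -- the product of q-integers
  have hqint : (∏ m ∈ Finset.Icc 1 (k - 1), qInt q (n - m)) * qFact q (n - k)
      = qFact q (n - 1) := by
    have h := qFact_prod (q := q) (k - 1) (n - 1) (by omega)
    have h2 : n - 1 - (k - 1) = n - k := by omega
    rw [h2] at h
    have h3 : ∏ m ∈ Finset.Icc 1 (k - 1), qInt q (n - m)
        = ∏ i ∈ Finset.range (k - 1), qInt q (n - 1 - i) := by
      rw [hIcc, Finset.prod_Ico_eq_prod_range]
      apply Finset.prod_congr (by congr 1) (fun i _ => by congr 1; omega)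
    rw [h3, h, mul_comm]
  -- unfold and finish by field arithmetic
  unfold lamEig
  rw [hqpow]
  have hnk1 : n - 1 + k = n + k - 1 := by omega
  rw [hnk1]
  have hfact1 : qFact q (n - 1) = qFact q (n - 2) * qInt q (n - 1) := by
    have h2 : n - 1 = (n - 2) + 1 := by omega
    rw [h2]
    unfold qFact
    rw [Finset.prod_range_succ, show n - 2 + 1 = n - 1 from by omega]
  have hpk : (qInt q n) ^ k = (qInt q n) ^ (k - 1) * qInt q n := by
    conv_lhs => rw [show k = (k - 1) + 1 from by omega]
    rw [pow_succ]
  have hP : (∏ m ∈ Finset.Icc 1 (k - 1), qInt q (n - m))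
      = qFact q (n - 2) * qInt q (n - 1) / qFact q (n - k) := by
    rw [← hfact1]
    field_simp
    linarith [hqint]
  rw [hP, hpk]
  have hpow1 : (0:ℝ) < (qInt q n) ^ (k - 1) := pow_pos hnpos _
  field_simp
  ring
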